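/- Let ψ₁(y) = det_{1≤i,j≤N}[ C(y_i − j + n − 1, y_i − j) ] for integers n ≥ N ≥ 1 and 1 ≤ y₁ < … < y_N. Then ψ₁(y) = ∏_{1≤i<j≤N}(y_j − y_i) · ∏_{i=1}^{N} (y_i − N + n − 1)! / ((y_i − 1)!·(i − N + n − 1)!). -/

import Mathlib

/-- Binomial coefficient `C(a, k)` for integer arguments, with the convention
that it vanishes when `k < 0` or `k > a`. -/
def zchoose (a k : ℤ) : ℕ :=
  if 0 ≤ k ∧ k ≤ a then a.toNat.choose k.toNat else 0

open Finset Polynomial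

/-- `(a+r)! = a! * (a+1)(a+2)⋯(a+r)` -/
lemma wf_fact_add (a r : ℕ) :
    Nat.factorial (a + r) = Nat.factorial a * ∏ t ∈ range r, (a + 1 + t) := by
  induction r with
  | zero => simp
  | succ r ih =>
    rw [prod_range_succ, ← mul_assoc, ← ih, ← Nat.add_assoc, Nat.factorial_succ]
    ring

lemma wf_choose_cast (a r : ℕ) :
    ((a + r).choose a : ℚ) = (∏ t ∈ range r, ((a : ℚ) + 1 + t)) / (Nat.factorial r) := by
  rw [Nat.cast_choose ℚ (Nat.le_add_right a r), Nat.add_sub_cancel_left]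
  have h : ((a + r).factorial : ℚ) = (a.factorial : ℚ) * ∏ t ∈ range r, ((a : ℚ) + 1 + t) := by
    rw [wf_fact_add a r]; push_cast; ring
  rw [h]
  have ha : (a.factorial : ℚ) ≠ 0 := Nat.cast_ne_zero.2 (Nat.factorial_ne_zero a)
  have hr : (r.factorial : ℚ) ≠ 0 := Nat.cast_ne_zero.2 (Nat.factorial_ne_zero r)
  field_simp

/-- Step 1: the zchoose entry as a product over `range (n-1)` divided by `(n-1)!`. -/
lemma wf_entry_prod (N n x c : ℕ) (hN : 1 ≤ N) (hn : N ≤ n) (hx : 1 ≤ x)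
    (hc1 : 1 ≤ c) (hcN : c ≤ N) :
    (zchoose ((x : ℤ) - c + n - 1) ((x : ℤ) - c) : ℚ)
      = (∏ t ∈ range (n - 1), ((x : ℚ) - c + 1 + t)) / (Nat.factorial (n - 1)) := by
  set m : ℤ := (x : ℤ) - c with hm
  rcases le_or_gt 0 m with h0 | h0
  · -- nonnegative case
    obtain ⟨a, ha⟩ : ∃ a : ℕ, m = a := ⟨m.toNat, (Int.toNat_of_nonneg h0).symm⟩
    have hn1 : 1 ≤ n := le_trans hN hn
    have e1 : ((x : ℤ) - c + n - 1).toNat = a + (n - 1) := by omega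
    have e2 : ((x : ℤ) - c).toNat = a := by omega
    rw [zchoose, if_pos ⟨h0, by omega⟩, e1, e2, wf_choose_cast a (n - 1)]
    have hxc : (x : ℚ) - c = a := by
      have h2 : (x : ℤ) - c = a := ha
      exact_mod_cast congrArg (fun z : ℤ => (z : ℚ)) h2
    congr 1
    refine Finset.prod_congr rfl fun t _ => by rw [hxc]
  · -- negative case: a factor of the product vanishes
    rw [zchoose, if_neg (by omega)]
    have hmN : -m ≤ (N : ℤ) - 1 := by omega
    set t0 : ℕ := (-m - 1).toNat with ht0
    have ht0' : ((t0 : ℤ)) = -m - 1 := Int.toNat_of_nonneg (by omega)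
    have hmem : t0 ∈ range (n - 1) := by
      rw [mem_range]; omega
    rw [Finset.prod_eq_zero hmem]
    · simp
    · have hq : ((x : ℚ) - c) = ((m : ℤ) : ℚ) := by rw [hm]; push_cast; ring
      rw [hq]
      have hq2 : ((t0 : ℚ)) = ((-m - 1 : ℤ) : ℚ) := by rw [← ht0']; push_cast; ring
      rw [hq2]
      push_cast
      ring

noncomputable def wfG (N n c : ℕ) : Polynomial ℚ :=
  (∏ t ∈ range (c - 1), (X + C ((t : ℚ) + 1 - c))) *
  (∏ s ∈ range (N - c), (X + C ((n : ℚ) - N + s)))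

noncomputable def wfC (N n : ℕ) : Matrix (Fin N) (Fin N) ℚ :=
  Matrix.of fun k j => (wfG N n (j.1 + 1)).coeff k.1

def wfA (N n : ℕ) (x : ℚ) : ℚ := ∏ s ∈ range (n - N), (x + s)

lemma wfG_natDegree_lt (N n c : ℕ) (hc1 : 1 ≤ c) (hcN : c ≤ N) :
    (wfG N n c).natDegree < N := by
  have h1 : (∏ t ∈ range (c - 1), (X + C ((t : ℚ) + 1 - c))).natDegree ≤ c - 1 := by
    refine le_trans (Polynomial.natDegree_prod_le _ _) (le_trans
      (Finset.sum_le_sum fun t _ => le_of_eq (natDegree_X_add_C _)) ?_)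
    simp
  have h2 : (∏ s ∈ range (N - c), (X + C ((n : ℚ) - N + s))).natDegree ≤ N - c := by
    refine le_trans (Polynomial.natDegree_prod_le _ _) (le_trans
      (Finset.sum_le_sum fun s _ => le_of_eq (natDegree_X_add_C _)) ?_)
    simp
  have := Polynomial.natDegree_mul_le (p := ∏ t ∈ range (c - 1), (X + C ((t : ℚ) + 1 - c)))
    (q := ∏ s ∈ range (N - c), (X + C ((n : ℚ) - N + s)))
  rw [wfG]
  omega

lemma wfG_eval (N n c : ℕ) (x : ℚ) :
    (wfG N n c).eval x
      = (∏ t ∈ range (c - 1), (x + ((t : ℚ) + 1 - c))) *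
        (∏ s ∈ range (N - c), (x + ((n : ℚ) - N + s))) := by
  simp [wfG, eval_prod]

/-- Step 2: splitting of the full product. -/
lemma wf_prod_split (N n x c : ℕ) (hN : 1 ≤ N) (hn : N ≤ n) (hc1 : 1 ≤ c) (hcN : c ≤ N) :
    ∏ t ∈ range (n - 1), ((x : ℚ) - c + 1 + t)
      = wfA N n x * (wfG N n c).eval (x : ℚ) := by
  have hsplit : n - 1 = (c - 1) + ((n - N) + (N - c)) := by omega
  rw [hsplit, Finset.prod_range_add, Finset.prod_range_add]
  rw [wfG_eval, wfA]
  have e1 : ∀ t : ℕ, (x : ℚ) - c + 1 + t = x + ((t : ℚ) + 1 - c) := fun t => by ring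
  have e2 : ∀ t : ℕ, t ∈ range (n - N) →
      (x : ℚ) - c + 1 + ((c - 1 + t : ℕ) : ℚ) = x + t := fun t _ => by
    push_cast [Nat.cast_sub hc1]
    ring
  have e3 : ∀ t : ℕ, t ∈ range (N - c) →
      (x : ℚ) - c + 1 + ((c - 1 + ((n - N) + t) : ℕ) : ℚ) = x + ((n : ℚ) - N + t) := fun t _ => by
    push_cast [Nat.cast_sub hc1, Nat.cast_sub hn]
    ring
  rw [Finset.prod_congr rfl e2, Finset.prod_congr rfl e3,
    Finset.prod_congr rfl (fun t _ => e1 t)]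
  ring

lemma wf_eval_mat {N : ℕ} (v : Fin N → ℚ) (p : Fin N → ℚ[X])
    (h : ∀ j, (p j).natDegree < N) :
    Matrix.of (fun i j => (p j).eval (v i))
      = Matrix.vandermonde v * (Matrix.of fun k j : Fin N => (p j).coeff k.1) := by
  ext i j
  rw [Matrix.mul_apply, Matrix.of_apply, Polynomial.eval_eq_sum_range' (h j),
    ← Fin.sum_univ_eq_sum_range]
  refine Finset.sum_congr rfl fun k _ => ?_
  simp [Matrix.vandermonde]
  ring

lemma wf_pairs_Ioi {N : ℕ} (f : Fin N → Fin N → ℚ) :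
    ∏ p ∈ Finset.univ.filter (fun p : Fin N × Fin N => p.1 < p.2), f p.1 p.2
      = ∏ i, ∏ j ∈ Finset.Ioi i, f i j := by
  rw [Finset.prod_sigma']
  refine Finset.prod_nbij' (fun p => ⟨p.1, p.2⟩) (fun q => (q.1, q.2)) ?_ ?_ ?_ ?_ ?_ <;>
    simp [Finset.mem_sigma, Finset.mem_Ioi]

lemma wf_pairs_range {N : ℕ} (f : ℕ → ℕ → ℚ) :
    ∏ p ∈ Finset.univ.filter (fun p : Fin N × Fin N => p.1 < p.2), f p.1.1 p.2.1
      = ∏ j ∈ range N, ∏ i ∈ range j, f i j := by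
  rw [Finset.prod_sigma']
  refine Finset.prod_bij (fun (p : Fin N × Fin N) _ => (⟨p.2.1, p.1.1⟩ : (_ : ℕ) × ℕ))
    ?_ ?_ ?_ ?_
  · intro p hp
    simp only [Finset.mem_filter, Finset.mem_univ, true_and] at hp
    simp [Finset.mem_sigma, Finset.mem_range, p.2.2, hp]
  · intro a ha b hb hab
    have h1 := congrArg Sigma.fst hab
    have h2 := congrArg Sigma.snd hab
    simp only at h1 h2
    ext
    · exact_mod_cast h2
    · exact_mod_cast h1
  · rintro ⟨j, i⟩ hq
    simp only [Finset.mem_sigma, Finset.mem_range] at hq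
    refine ⟨(⟨i, lt_trans hq.2 hq.1⟩, ⟨j, hq.1⟩), ?_, rfl⟩
    simp only [Finset.mem_filter, Finset.mem_univ, true_and, Fin.mk_lt_mk]
    exact hq.2
  · intro p hp
    rfl

/-- The key determinant factorization, valid for any `y` with entries `≥ 1`. -/
lemma wf_key (N n : ℕ) (hN : 1 ≤ N) (hn : N ≤ n) (y : Fin N → ℕ) (hy1 : ∀ i, 1 ≤ y i) :
    (Matrix.of fun i j : Fin N =>
        (zchoose ((y i : ℤ) - (j.1 + 1) + n - 1) ((y i : ℤ) - (j.1 + 1)) : ℚ)).det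
      = (1 / (Nat.factorial (n - 1)) : ℚ) ^ N * (∏ i, wfA N n (y i)) *
        (∏ i, ∏ j ∈ Finset.Ioi i, ((y j : ℚ) - (y i : ℚ))) * (wfC N n).det := by
  have hentry : ∀ i j : Fin N,
      (zchoose ((y i : ℤ) - (j.1 + 1) + n - 1) ((y i : ℤ) - (j.1 + 1)) : ℚ)
        = ((1 / (Nat.factorial (n - 1)) : ℚ) * wfA N n (y i)) *
          (wfG N n (j.1 + 1)).eval ((y i : ℚ)) := by
    intro i j
    have hc1 : 1 ≤ j.1 + 1 := Nat.succ_le_succ (Nat.zero_le _)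
    have hcN : j.1 + 1 ≤ N := j.2
    have h := wf_entry_prod N n (y i) (j.1 + 1) hN hn (hy1 i) hc1 hcN
    rw [wf_prod_split N n (y i) (j.1 + 1) hN hn hc1 hcN] at h
    have hc : ((j.1 + 1 : ℕ) : ℤ) = (j.1 : ℤ) + 1 := by push_cast; ring
    rw [hc] at h
    have hcq : ∀ t : ℕ, (y i : ℚ) - ((j.1 + 1 : ℕ) : ℚ) = (y i : ℚ) - ((j.1 : ℚ) + 1) :=
      fun t => by push_cast; ring
    rw [h]
    ring
  have hM : (Matrix.of fun i j : Fin N =>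
        (zchoose ((y i : ℤ) - (j.1 + 1) + n - 1) ((y i : ℤ) - (j.1 + 1)) : ℚ))
      = Matrix.of (fun i j : Fin N =>
          ((1 / (Nat.factorial (n - 1)) : ℚ) * wfA N n (y i)) *
            ((Matrix.of fun i j : Fin N => (wfG N n (j.1 + 1)).eval ((y i : ℚ))) i j)) := by
    ext i j
    exact hentry i j
  rw [hM, Matrix.det_mul_column,
    wf_eval_mat (fun i => (y i : ℚ)) (fun j => wfG N n (j.1 + 1))
      (fun j => wfG_natDegree_lt N n (j.1 + 1) (Nat.succ_le_succ (Nat.zero_le _)) j.2),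
    Matrix.det_mul, Matrix.det_vandermonde]
  rw [Finset.prod_mul_distrib, Finset.prod_const, Finset.card_univ, Fintype.card_fin]
  have hw : (Matrix.of fun k j : Fin N => (wfG N n (j.1 + 1)).coeff k.1) = wfC N n := rfl
  rw [hw]
  ring
open Finset Polynomial

lemma wf_det_y0 (N n : ℕ) (hN : 1 ≤ N) (hn : N ≤ n) :
    (Matrix.of fun i j : Fin N =>
        (zchoose (((i.1 + 1 : ℕ) : ℤ) - (j.1 + 1) + n - 1)
          (((i.1 + 1 : ℕ) : ℤ) - (j.1 + 1)) : ℚ)).det = 1 := by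
  have hn1 : 1 ≤ n := le_trans hN hn
  rw [Matrix.det_of_lowerTriangular _ ?_]
  · have hdiag : ∀ i : Fin N,
        (zchoose (((i.1 + 1 : ℕ) : ℤ) - (i.1 + 1) + n - 1)
          (((i.1 + 1 : ℕ) : ℤ) - (i.1 + 1)) : ℚ) = 1 := by
      intro i
      have e1 : ((i.1 + 1 : ℕ) : ℤ) - (i.1 + 1) + n - 1 = ((n - 1 : ℕ) : ℤ) := by
        push_cast; omega
      have e2 : ((i.1 + 1 : ℕ) : ℤ) - (i.1 + 1) = (0 : ℤ) := by push_cast; ring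
      rw [e1] at *
      rw [e2]
      rw [zchoose, if_pos ⟨le_refl 0, by positivity⟩]
      simp
    simp only [Matrix.of_apply]
    rw [Finset.prod_congr rfl fun i _ => hdiag i]
    simp
  · intro i j hij
    have hlt : i < j := hij
    simp only [Matrix.of_apply]
    rw [zchoose, if_neg ?_]
    · simp
    · rw [not_and_or]
      left
      simp only [not_le]
      have : (i.1 : ℤ) < j.1 := by exact_mod_cast hlt
      push_cast
      omega

lemma wf_desc_prod (j : ℕ) : ∏ i ∈ range j, ((j : ℚ) - i) = (Nat.factorial j : ℚ) := by
  have h1 : ∏ i ∈ range j, (j - i) = Nat.factorial j := by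
    have h := Finset.prod_range_reflect (fun k => k + 1) j
    rw [Finset.prod_range_add_one_eq_factorial] at h
    rw [← h]
    refine Finset.prod_congr rfl fun i hi => ?_
    have := mem_range.1 hi
    omega
  calc ∏ i ∈ range j, ((j : ℚ) - i)
      = ∏ i ∈ range j, (((j - i : ℕ) : ℚ)) := by
        refine Finset.prod_congr rfl fun i hi => ?_
        have := mem_range.1 hi
        push_cast [Nat.cast_sub (le_of_lt this)]
        ring
    _ = (((∏ i ∈ range j, (j - i) : ℕ)) : ℚ) := by push_cast; rfl
    _ = _ := by rw [h1]

lemma wf_V0 (N : ℕ) :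
    (∏ i : Fin N, ∏ j ∈ Finset.Ioi i, (((j.1 + 1 : ℕ) : ℚ) - ((i.1 + 1 : ℕ) : ℚ)))
      = ∏ i : Fin N, (Nat.factorial i.1 : ℚ) := by
  rw [← wf_pairs_Ioi (f := fun i j : Fin N => ((j.1 + 1 : ℕ) : ℚ) - ((i.1 + 1 : ℕ) : ℚ))]
  rw [wf_pairs_range (f := fun a b => ((b + 1 : ℕ) : ℚ) - ((a + 1 : ℕ) : ℚ))]
  rw [Fin.prod_univ_eq_prod_range (fun i => (Nat.factorial i : ℚ)) N]
  refine Finset.prod_congr rfl fun j hj => ?_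
  rw [← wf_desc_prod j]
  refine Finset.prod_congr rfl fun i hi => by push_cast; ring

lemma wfA_nat (N n m : ℕ) (hn : N ≤ n) (hm : 1 ≤ m) :
    wfA N n m = ((m + n - N - 1).factorial : ℚ) / ((m - 1).factorial : ℚ) := by
  have h := wf_fact_add (m - 1) (n - N)
  have he : m - 1 + (n - N) = m + n - N - 1 := by omega
  rw [he] at h
  rw [wfA]
  have h2 : ∏ s ∈ range (n - N), ((m : ℚ) + s)
      = ∏ t ∈ range (n - N), (((m - 1 : ℕ) : ℚ) + 1 + t) := by
    refine Finset.prod_congr rfl fun t _ => by push_cast [Nat.cast_sub hm]; ring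
  rw [h2]
  have hcast : ((m + n - N - 1).factorial : ℚ)
      = ((m - 1).factorial : ℚ) * ∏ t ∈ range (n - N), (((m - 1 : ℕ) : ℚ) + 1 + t) := by
    exact_mod_cast congrArg (fun k : ℕ => (k : ℚ)) h
  rw [hcast]
  have hne : (((m - 1).factorial : ℚ)) ≠ 0 := Nat.cast_ne_zero.2 (Nat.factorial_ne_zero _)
  field_simp

/-- Evaluation of the wave function `ψ₁`:
for `n ≥ N ≥ 1` and `1 ≤ y₁ < ⋯ < y_N`,
`det_{1≤i,j≤N} C(y_i-j+n-1, y_i-j)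
   = ∏_{1≤i<j≤N} (y_j-y_i) ⬝ ∏_{i=1}^{N} (y_i-N+n-1)! / ((y_i-1)! (i-N+n-1)!)`. -/
theorem wave_function_det_eval (N n : ℕ) (hN : 1 ≤ N) (hn : N ≤ n)
    (y : Fin N → ℕ) (hy1 : ∀ i, 1 ≤ y i) (hmono : StrictMono y) :
    (Matrix.of fun i j : Fin N =>
        (zchoose ((y i : ℤ) - (j.1 + 1) + n - 1) ((y i : ℤ) - (j.1 + 1)) : ℚ)).det
      = (∏ p ∈ Finset.univ.filter (fun p : Fin N × Fin N => p.1 < p.2),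
            ((y p.2 : ℚ) - (y p.1 : ℚ))) *
        ∏ i : Fin N,
          (Nat.factorial (y i + n - N - 1) : ℚ) /
            ((Nat.factorial (y i - 1) : ℚ) *
              (Nat.factorial ((i.1 + 1) + n - N - 1) : ℚ)) := by
  have key_y := wf_key N n hN hn y hy1
  have key_y0 := wf_key N n hN hn (fun i => i.1 + 1) (fun i => Nat.le_add_left 1 i.1)
  rw [wf_det_y0 N n hN hn, wf_V0 N] at key_y0
  rw [key_y, ← wf_pairs_Ioi (f := fun i j : Fin N => (y j : ℚ) - (y i : ℚ))]
  have hP : (∏ i, wfA N n (y i))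
      = (∏ i : Fin N,
          (Nat.factorial (y i + n - N - 1) : ℚ) /
            ((Nat.factorial (y i - 1) : ℚ) *
              (Nat.factorial ((i.1 + 1) + n - N - 1) : ℚ))) *
        ((∏ i : Fin N, wfA N n ((i.1 + 1 : ℕ))) * ∏ i : Fin N, (Nat.factorial i.1 : ℚ)) := by
    rw [← Finset.prod_mul_distrib, ← Finset.prod_mul_distrib]
    refine Finset.prod_congr rfl fun i _ => ?_
    rw [wfA_nat N n (y i) hn (hy1 i), wfA_nat N n (i.1 + 1) hn (Nat.le_add_left 1 i.1)]
    have e : i.1 + 1 - 1 = i.1 := by omega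
    have e2 : i.1 + 1 + n - N - 1 = (i.1 + 1) + n - N - 1 := rfl
    rw [e]
    have hb : ((Nat.factorial (y i - 1) : ℚ)) ≠ 0 := Nat.cast_ne_zero.2 (Nat.factorial_ne_zero _)
    have hc : ((Nat.factorial ((i.1 + 1) + n - N - 1) : ℚ)) ≠ 0 :=
      Nat.cast_ne_zero.2 (Nat.factorial_ne_zero _)
    have hi : ((Nat.factorial i.1 : ℚ)) ≠ 0 := Nat.cast_ne_zero.2 (Nat.factorial_ne_zero _)
    field_simp
  rw [hP]
  linear_combination ((∏ p ∈ Finset.univ.filter (fun p : Fin N × Fin N => p.1 < p.2),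
            ((y p.2 : ℚ) - (y p.1 : ℚ))) *
        ∏ i : Fin N,
          (Nat.factorial (y i + n - N - 1) : ℚ) /
            ((Nat.factorial (y i - 1) : ℚ) *
              (Nat.factorial ((i.1 + 1) + n - N - 1) : ℚ))) * key_y0.symm
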